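/- Let ε be a real number with √2 − 1 ≤ ε < 1, and let Z be a nonnegative real-valued random variable with finite second moment satisfying σ²[Z] ≤ E[Z]. If E[Z] ≥ 4·pivot(ε), then P(Z < thresh(ε)) ≤ 1/62.5. -/

import Mathlib

open MeasureTheory ProbabilityTheory

/-- `pivot ε = 9.84·(1 + 1/ε)²`. -/
noncomputable def pivot (ε : ℝ) : ℝ := 9.84 * (1 + 1 / ε) ^ 2

/-- `thresh ε = 9.84·(1 + ε/(1+ε))·(1 + 1/ε)²`. -/
noncomputable def thresh (ε : ℝ) : ℝ := 9.84 * (1 + ε / (1 + ε)) * (1 + 1 / ε) ^ 2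

theorem stmt_12 {Ω : Type*} [MeasurableSpace Ω] (μ : Measure Ω) [IsProbabilityMeasure μ]
    (ε : ℝ) (hlo : Real.sqrt 2 - 1 ≤ ε) (hhi : ε < 1)
    (Z : Ω → ℝ) (hZnonneg : ∀ ω, 0 ≤ Z ω) (hL2 : MemLp Z 2 μ)
    (hvar : variance Z μ ≤ ∫ x, Z x ∂μ)
    (hE : 4 * pivot ε ≤ ∫ x, Z x ∂μ) :
    (μ {ω | Z ω < thresh ε}).toReal ≤ 1 / 62.5 := by
  set m := ∫ x, Z x ∂μ with hm
  set v := variance Z μ with hv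
  have hε0 : 0 < ε := by
    have h2 : Real.sqrt 2 ^ 2 = 2 := Real.sq_sqrt (by norm_num)
    have h3 : 0 ≤ Real.sqrt 2 := Real.sqrt_nonneg 2
    nlinarith
  have hε1 : 1 < 1 / ε := by
    rw [lt_div_iff₀ hε0]; linarith
  have hq4 : 4 < (1 + 1 / ε) ^ 2 := by nlinarith
  have hp : 39.36 < pivot ε := by unfold pivot; nlinarith
  have h1ε : (0:ℝ) < 1 + ε := by linarith
  have hs : ε / (1 + ε) ≤ 1 / 2 := by
    rw [div_le_div_iff₀ h1ε (by norm_num)]; linarith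
  have hs0 : 0 ≤ ε / (1 + ε) := div_nonneg hε0.le h1ε.le
  have hT : thresh ε ≤ 3 / 2 * pivot ε := by
    unfold thresh pivot
    nlinarith [sq_nonneg (1 + 1 / ε)]
  have hm157 : 157.44 < m := by linarith
  set a := m - thresh ε with ha_def
  have ha58 : 5 / 8 * m ≤ a := by
    have := hE
    simp only [ha_def]
    linarith
  have ha0 : 0 < a := by linarith
  have hv0 : 0 ≤ v := variance_nonneg Z μ
  set u := v / a with hu_def
  have hu0 : 0 ≤ u := div_nonneg hv0 ha0.le
  have hau : a * u = v := by
    rw [hu_def]; field_simp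
  have key : 61.5 * v ≤ a ^ 2 := by nlinarith
  -- Markov on f = (m + u - Z)^2 at level (a+u)^2
  set f : Ω → ℝ := fun ω => (m + u - Z ω) ^ 2 with hf_def
  have hfnn : 0 ≤ᵐ[μ] f := Filter.Eventually.of_forall fun ω => sq_nonneg _
  have hZ1 : Integrable Z μ := hL2.integrable one_le_two
  have hZ2 : Integrable (fun ω => Z ω ^ 2) μ := by
    have := hL2.integrable_sq
    simpa [Pi.pow_apply] using this
  have hfint : Integrable f μ := by
    have : f = fun ω => (m + u) ^ 2 - 2 * (m + u) * Z ω + Z ω ^ 2 := by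
      funext ω; simp only [hf_def]; ring
    rw [this]
    exact (((integrable_const _).sub (hZ1.const_mul _)).add hZ2)
  have markov := mul_meas_ge_le_integral_of_nonneg hfnn hfint ((a + u) ^ 2)
  -- compute the integral of f
  have hvd : ∫ ω, Z ω ^ 2 ∂μ = v + m ^ 2 := by
    have := variance_eq_sub hL2
    simp only [Pi.pow_apply] at this
    rw [hv, this]; ring
  have hintf : ∫ ω, f ω ∂μ = v + u ^ 2 := by
    have h1 : Integrable (fun ω => (m + u) ^ 2 - 2 * (m + u) * Z ω) μ :=
      (integrable_const _).sub (hZ1.const_mul _)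
    calc ∫ ω, f ω ∂μ = ∫ ω, ((m + u) ^ 2 - 2 * (m + u) * Z ω + Z ω ^ 2) ∂μ := by
          apply integral_congr_ae; filter_upwards with ω; simp only [hf_def]; ring
      _ = (∫ ω, ((m + u) ^ 2 - 2 * (m + u) * Z ω) ∂μ) + ∫ ω, Z ω ^ 2 ∂μ := integral_add h1 hZ2
      _ = ((m + u) ^ 2 - 2 * (m + u) * (∫ x, Z x ∂μ)) + (v + m ^ 2) := by
          rw [integral_sub (integrable_const _) (hZ1.const_mul _), integral_const,
            integral_const_mul, hvd]
          simp
      _ = v + u ^ 2 := by rw [← hm]; ring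
  -- subset relation
  have hsub : {ω | Z ω < thresh ε} ⊆ {x | (a + u) ^ 2 ≤ f x} := by
    intro ω hω
    have h1 : a + u ≤ m + u - Z ω := by
      simp only [Set.mem_setOf_eq] at hω
      simp only [ha_def]; linarith
    have h2 : 0 ≤ a + u := by linarith
    simp only [Set.mem_setOf_eq, hf_def]
    exact pow_le_pow_left₀ h2 h1 2
  have hmono : (μ {ω | Z ω < thresh ε}).toReal ≤ (μ {x | (a + u) ^ 2 ≤ f x}).toReal :=
    ENNReal.toReal_mono (measure_ne_top μ _) (measure_mono hsub)
  clear_value f u a v m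
  -- numeric bound: ∫ f ≤ (a+u)^2 / 62.5
  have h61u : 61.5 * u ^ 2 ≤ v := by
    have ha2 : (0:ℝ) < a ^ 2 := pow_pos ha0 2
    have hin : a ^ 2 * (61.5 * u ^ 2) ≤ a ^ 2 * v := by
      have hv2 : 61.5 * v ^ 2 ≤ a ^ 2 * v := by
        have h := mul_le_mul_of_nonneg_right key hv0
        calc 61.5 * v ^ 2 = 61.5 * v * v := by ring
          _ ≤ a ^ 2 * v := h
      have e : a ^ 2 * (61.5 * u ^ 2) = 61.5 * (a * u) ^ 2 := by ring
      rw [e, hau]; exact hv2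
    exact le_of_mul_le_mul_left hin ha2
  have hfinal : v + u ^ 2 ≤ (a + u) ^ 2 * (1 / 62.5) := by
    have hexp : (a + u) ^ 2 * (1 / 62.5) = (a ^ 2 + 2 * (a * u) + u ^ 2) * (1 / 62.5) := by ring
    rw [hexp, hau]; linarith
  have hc0 : (0:ℝ) < (a + u) ^ 2 := pow_pos (by linarith) 2
  have : (a + u) ^ 2 * (μ {ω | Z ω < thresh ε}).toReal ≤ (a + u) ^ 2 * (1 / 62.5) := by
    calc (a + u) ^ 2 * (μ {ω | Z ω < thresh ε}).toReal
        ≤ (a + u) ^ 2 * (μ {x | (a + u) ^ 2 ≤ f x}).toReal :=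
          mul_le_mul_of_nonneg_left hmono hc0.le
      _ ≤ ∫ ω, f ω ∂μ := markov
      _ = v + u ^ 2 := hintf
      _ ≤ (a + u) ^ 2 * (1 / 62.5) := hfinal
  have := le_of_mul_le_mul_left this hc0
  linarith
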